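/- Conservation laws at antipodal points: let k₀, k₁ > 0, r₀ = (1/k₀, 0, 0), r₁ = (−1/k₁, 0, 0), and let v = (vₓ, vᵧ, v𝓏), w = (wₓ, wᵧ, w𝓏) ∈ ℝ³ with (vᵧ, v𝓏) ≠ (0, 0). If r₀ × v = r₁ × w and v × (r₀ × v) − (1,0,0) = w × (r₁ × w) − (−1,0,0), then wₓ = vₓ, wᵧ = −(k₁/k₀)·vᵧ and w𝓏 = −(k₁/k₀)·v𝓏. -/

import Mathlib

open scoped InnerProductSpace

/-- Cross product in ℝ³ (modelled as `EuclideanSpace ℝ (Fin 3)`). -/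
noncomputable def cross3 (a b : EuclideanSpace ℝ (Fin 3)) : EuclideanSpace ℝ (Fin 3) :=
  (WithLp.equiv 2 (Fin 3 → ℝ)).symm
    ![a 1 * b 2 - a 2 * b 1, a 2 * b 0 - a 0 * b 2, a 0 * b 1 - a 1 * b 0]

/-- The vector (x, y, z) ∈ ℝ³. -/
noncomputable def v3 (x y z : ℝ) : EuclideanSpace ℝ (Fin 3) :=
  (WithLp.equiv 2 (Fin 3 → ℝ)).symm ![x, y, z]

/-- Conservation laws at antipodal points: if the angular momentum and (rescaled)
eccentricity vector agree at r₀ = (1/k₀,0,0) with velocity v and at r₁ = (−1/k₁,0,0)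
with velocity w, and (vᵧ, v𝓏) ≠ (0,0), then wₓ = vₓ, wᵧ = −(k₁/k₀)vᵧ, w𝓏 = −(k₁/k₀)v𝓏. -/
theorem conservation_at_antipodal_points
    (k₀ k₁ : ℝ) (hk₀ : 0 < k₀) (hk₁ : 0 < k₁)
    (v w : EuclideanSpace ℝ (Fin 3))
    (hne : (v 1, v 2) ≠ (0, 0))
    (hmom : cross3 (v3 (1 / k₀) 0 0) v = cross3 (v3 (-(1 / k₁)) 0 0) w)
    (hecc : cross3 v (cross3 (v3 (1 / k₀) 0 0) v) - v3 1 0 0 =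
            cross3 w (cross3 (v3 (-(1 / k₁)) 0 0) w) - v3 (-1) 0 0) :
    w 0 = v 0 ∧ w 1 = -(k₁ / k₀) * v 1 ∧ w 2 = -(k₁ / k₀) * v 2 := by
  have hk₀' := hk₀.ne'
  have hk₁' := hk₁.ne'
  have hm1 : k₀⁻¹ * v 2 = -(k₁⁻¹ * w 2) := by
    have := congrFun (congrArg (WithLp.equiv 2 (Fin 3 → ℝ)) hmom) 1
    simp [cross3, v3] at this
    linarith
  have hm2 : k₀⁻¹ * v 1 = -(k₁⁻¹ * w 1) := by
    have := congrFun (congrArg (WithLp.equiv 2 (Fin 3 → ℝ)) hmom) 2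
    simp [cross3, v3] at this
    linarith
  have hw1 : w 1 = -(k₁ / k₀) * v 1 := by field_simp at hm2 ⊢; linarith
  have hw2 : w 2 = -(k₁ / k₀) * v 2 := by field_simp at hm1 ⊢; linarith
  refine ⟨?_, hw1, hw2⟩
  have he1 := congrFun (congrArg (WithLp.equiv 2 (Fin 3 → ℝ)) hecc) 1
  have he2 := congrFun (congrArg (WithLp.equiv 2 (Fin 3 → ℝ)) hecc) 2
  simp [cross3, v3] at he1 he2
  rw [hw1] at he1
  rw [hw2] at he2
  field_simp at he1 he2
  rcases (not_and_or.mp (fun hh => hne (Prod.ext hh.1 hh.2))) with h | h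
  · have hv : v 1 ≠ 0 := h
    have hc : v 0 * (v 1 * (k₁ * k₀)) = w 0 * (v 1 * (k₁ * k₀)) := by
      ring_nf; ring_nf at he1; linear_combination (-(k₁ * k₀)) * he1
    have := mul_right_cancel₀ (by positivity) hc
    linarith
  · have hv : v 2 ≠ 0 := h
    have hc : v 0 * (v 2 * (k₁ * k₀)) = w 0 * (v 2 * (k₁ * k₀)) := by
      ring_nf; ring_nf at he2; linear_combination (-(k₁ * k₀)) * he2
    have := mul_right_cancel₀ (by positivity) hc
    linarith
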